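/- Let p, p* and q be three distinct primes, let k and k* be positive integers with p^(k−1) || (q − 1) and (p*)^(k*−1) || (q − 1), and let a and a* be positive integers such that p divides σ(q^(2a)) and p* divides σ(q^(2a*)). Let f be the smallest odd integer greater than 1 with q^f ≡ 1 (mod p^k), and let f* be the smallest odd integer greater than 1 with q^(f*) ≡ 1 (mod (p*)^(k*)). If f* divides f, then the product p·p* divides σ(q^(2a)). -/
import Mathlib

open Finset

/-- `(q-1) * σ(q^n) = q^(n+1) - 1`. -/
lemma aux_sigma_mul (q n : ℕ) (hq : q.Prime) :
    (q - 1) * (ArithmeticFunction.sigma 1) (q ^ n) = q ^ (n + 1) - 1 := by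
  have h1 : (ArithmeticFunction.sigma 1) (q ^ n) = ∑ i ∈ range (n+1), q ^ i := by
    rw [ArithmeticFunction.sigma_apply, Nat.sum_divisors_prime_pow hq]; simp
  rw [h1]
  have h := geom_sum_mul (q:ℤ) (n+1)
  zify [hq.one_le, Nat.one_le_pow _ _ hq.pos]
  linarith [h]

/-- Key equivalence: `p ∣ σ(q^n) ↔ p^k ∣ q^(n+1) - 1`. -/
lemma aux_key (p q k n : ℕ) (hp : p.Prime) (hq : q.Prime) (hk : 0 < k)
    (hdvd : p ^ (k - 1) ∣ q - 1) (hndvd : ¬ p ^ k ∣ q - 1) :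
    p ∣ (ArithmeticFunction.sigma 1) (q ^ n) ↔ p ^ k ∣ q ^ (n + 1) - 1 := by
  obtain ⟨m, hm⟩ := hdvd
  have hpk : p ^ k = p ^ (k - 1) * p := by
    rw [← pow_succ]; congr 1; omega
  have hpm : ¬ p ∣ m := by
    intro hd
    exact hndvd (by rw [hpk, hm]; exact mul_dvd_mul_left _ hd)
  have hmul := aux_sigma_mul q n hq
  constructor
  · rintro ⟨s, hs⟩
    rw [← hmul, hm, hs, hpk]
    exact ⟨m * s, by ring⟩
  · intro h
    rw [← hmul, hm, hpk, mul_assoc] at h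
    have := (Nat.mul_dvd_mul_iff_left (pow_pos hp.pos (k-1))).mp h
    rcases (Nat.Prime.dvd_mul hp).mp this with h' | h'
    · exact absurd h' hpm
    · exact h'

/-- Lift `q^f ≡ 1 [MOD M]` and `f ∣ N` to `q^N ≡ 1 [MOD M]`. -/
lemma aux_lift (q M f N : ℕ) (hfm : q ^ f ≡ 1 [MOD M]) (hfN : f ∣ N) :
    q ^ N ≡ 1 [MOD M] := by
  obtain ⟨c, rfl⟩ := hfN
  calc q ^ (f * c) = (q ^ f) ^ c := by rw [pow_mul]
    _ ≡ 1 ^ c [MOD M] := hfm.pow c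
    _ = 1 := one_pow c

/-- `f` divides any odd `N` with `q^N ≡ 1 [MOD p^k]`. -/
lemma aux_f_dvd (p q k f : ℕ) (hq : 1 ≤ q) (hndvd : ¬ p ^ k ∣ q - 1)
    (hf : Odd f ∧ 1 < f ∧ q ^ f ≡ 1 [MOD p ^ k] ∧
      ∀ g : ℕ, Odd g → 1 < g → q ^ g ≡ 1 [MOD p ^ k] → f ≤ g)
    {N : ℕ} (hNodd : Odd N) (hN : q ^ N ≡ 1 [MOD p ^ k]) : f ∣ N := by
  obtain ⟨hfo, hf1, hfm, hmin⟩ := hf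
  set d := orderOf ((q : ZMod (p ^ k))) with hd
  have hmod : ∀ m : ℕ, q ^ m ≡ 1 [MOD p ^ k] ↔ ((q : ZMod (p ^ k))) ^ m = 1 := by
    intro m
    rw [← ZMod.natCast_eq_natCast_iff]
    push_cast
    tauto
  -- d divides N and f
  have hdN : d ∣ N := orderOf_dvd_of_pow_eq_one ((hmod N).mp hN)
  have hdf : d ∣ f := orderOf_dvd_of_pow_eq_one ((hmod f).mp hfm)
  have hNpos : 0 < N := by
    rcases hNodd with ⟨t, ht⟩; omega
  have hdpos : 0 < d := Nat.pos_of_dvd_of_pos hdN hNpos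
  have hdodd : Odd d := by
    rcases Nat.even_or_odd d with he | ho
    · exfalso
      have : 2 ∣ N := dvd_trans he.two_dvd hdN
      rcases hNodd with ⟨t, ht⟩; omega
    · exact ho
  have hd1 : 1 < d := by
    rcases Nat.lt_or_ge 1 d with h | h
    · exact h
    · exfalso
      have hd1' : d = 1 := by omega
      have : ((q : ZMod (p ^ k))) = 1 := orderOf_eq_one_iff.mp hd1'
      have hq1 : q ≡ 1 [MOD p ^ k] := by
        rw [← ZMod.natCast_eq_natCast_iff]; push_cast; exact this
      exact hndvd ((Nat.modEq_iff_dvd' hq).mp hq1.symm)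
  have hdm : q ^ d ≡ 1 [MOD p ^ k] := (hmod d).mpr (pow_orderOf_eq_one _)
  have hfled : f ≤ d := hmin d hdodd hd1 hdm
  have : f = d := le_antisymm hfled (Nat.le_of_dvd (by omega) hdf)
  exact this ▸ hdN



/-- Let `p, p*, q` be three distinct primes with `p^(k-1) || q-1` and `p*^(k*-1) || q-1`,
and suppose `p ∣ σ(q^(2a))`, `p* ∣ σ(q^(2a*))`. If `f*` (the smallest odd integer `> 1`
with `q^(f*) ≡ 1 [MOD p*^(k*)]`) divides `f` (the smallest odd integer `> 1` with
`q^f ≡ 1 [MOD p^k]`), then `p·p* ∣ σ(q^(2a))`. -/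
theorem mul_prime_dvd_sigma (p p' q k k' a a' f f' : ℕ)
    (hp : p.Prime) (hp' : p'.Prime) (hq : q.Prime)
    (hpp' : p ≠ p') (hpq : p ≠ q) (hp'q : p' ≠ q)
    (hk : 0 < k) (hk' : 0 < k')
    (hdvd : p ^ (k - 1) ∣ q - 1) (hndvd : ¬ p ^ k ∣ q - 1)
    (hdvd' : p' ^ (k' - 1) ∣ q - 1) (hndvd' : ¬ p' ^ k' ∣ q - 1)
    (ha : 0 < a) (ha' : 0 < a')
    (hps : p ∣ (ArithmeticFunction.sigma 1) (q ^ (2 * a)))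
    (hps' : p' ∣ (ArithmeticFunction.sigma 1) (q ^ (2 * a')))
    (hf : Odd f ∧ 1 < f ∧ q ^ f ≡ 1 [MOD p ^ k] ∧
      ∀ g : ℕ, Odd g → 1 < g → q ^ g ≡ 1 [MOD p ^ k] → f ≤ g)
    (hf' : Odd f' ∧ 1 < f' ∧ q ^ f' ≡ 1 [MOD p' ^ k'] ∧
      ∀ g : ℕ, Odd g → 1 < g → q ^ g ≡ 1 [MOD p' ^ k'] → f' ≤ g)
    (hff' : f' ∣ f) :
    p * p' ∣ (ArithmeticFunction.sigma 1) (q ^ (2 * a)) := by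
  -- from `p ∣ σ(q^(2a))`, get `q^(2a+1) ≡ 1 [MOD p^k]`
  have h1 : p ^ k ∣ q ^ (2 * a + 1) - 1 :=
    (aux_key p q k (2 * a) hp hq hk hdvd hndvd).mp hps
  have hmodp : q ^ (2 * a + 1) ≡ 1 [MOD p ^ k] :=
    ((Nat.modEq_iff_dvd' (Nat.one_le_pow _ _ hq.pos)).mpr h1).symm
  -- hence `f ∣ 2a+1`
  have hfdvd : f ∣ 2 * a + 1 :=
    aux_f_dvd p q k f hq.one_le hndvd hf ⟨a, by ring⟩ hmodp
  -- so `f' ∣ 2a+1`, hence `q^(2a+1) ≡ 1 [MOD p'^k']`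
  have hmodp' : q ^ (2 * a + 1) ≡ 1 [MOD p' ^ k'] :=
    aux_lift q (p' ^ k') f' (2 * a + 1) hf'.2.2.1 (hff'.trans hfdvd)
  have h2 : p' ^ k' ∣ q ^ (2 * a + 1) - 1 :=
    (Nat.modEq_iff_dvd' (Nat.one_le_pow _ _ hq.pos)).mp hmodp'.symm
  have hps2 : p' ∣ (ArithmeticFunction.sigma 1) (q ^ (2 * a)) :=
    (aux_key p' q k' (2 * a) hp' hq hk' hdvd' hndvd').mpr h2
  exact Nat.Coprime.mul_dvd_of_dvd_of_dvd
    ((Nat.coprime_primes hp hp').mpr hpp') hps hps2
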